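/- Let a ∈ ℂ^M be nonzero, i an index, and v̂ = a + ‖a‖·sign(a_i)·e_i. Then v̂ maximizes |e_i^H Q_v a|² over all nonzero v ∈ ℂ^M: for every nonzero v, |e_i^H Q_v a|² ≤ |e_i^H Q_{v̂} a|². -/

import Mathlib

open Matrix MeasureTheory

/-- Squared... Euclidean norm on `Fin M → ℂ`. -/
noncomputable def enorm' {M : ℕ} (v : Fin M → ℂ) : ℝ :=
  ‖(WithLp.equiv 2 (Fin M → ℂ)).symm v‖

/-- Householder reflection matrix `Q_v = I - (2/‖v‖²) v vᴴ`. -/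
noncomputable def householder {M : ℕ} (v : Fin M → ℂ) : Matrix (Fin M) (Fin M) ℂ :=
  1 - ((2 / enorm' v ^ 2 : ℝ) : ℂ) • Matrix.vecMulVec v (star v)

/-- complex sign: `z/|z|` for `z ≠ 0`, and `1` for `z = 0`. -/
noncomputable def csign (z : ℂ) : ℂ := if z = 0 then 1 else z / (‖z‖ : ℂ)

lemma enorm'_sq {M : ℕ} (v : Fin M → ℂ) :
    (enorm' v) ^ 2 = ∑ j, Complex.normSq (v j) := by
  simp only [enorm', EuclideanSpace.norm_eq]
  rw [Real.sq_sqrt (by positivity)]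
  simp [Complex.sq_norm]

lemma hh_mulVec {M : ℕ} (v a : Fin M → ℂ) (i : Fin M) :
    (householder v).mulVec a i
      = a i - ((2 / enorm' v ^ 2 : ℝ) : ℂ) * (v i * ∑ j, (starRingEnd ℂ) (v j) * a j) := by
  rw [householder, Matrix.sub_mulVec, Matrix.smul_mulVec]
  simp only [Matrix.one_mulVec, Pi.sub_apply, Pi.smul_apply, smul_eq_mul]
  congr 1
  simp only [Matrix.mulVec, dotProduct, Matrix.vecMulVec_apply, Pi.star_apply,
    Complex.star_def, Finset.mul_sum]
  ring_nf

lemma enorm'_ne_zero {M : ℕ} {v : Fin M → ℂ} (hv : v ≠ 0) : enorm' v ≠ 0 := by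
  rw [enorm', norm_ne_zero_iff]
  intro h
  apply hv
  funext j
  have := congrFun (congrArg (WithLp.equiv 2 _) h) j
  simpa using this

lemma hh_norm_sum {M : ℕ} (v a : Fin M → ℂ) (hv : v ≠ 0) :
    ∑ j, Complex.normSq ((householder v).mulVec a j) = ∑ j, Complex.normSq (a j) := by
  have hv' : enorm' v ≠ 0 := enorm'_ne_zero hv
  set n : ℝ := enorm' v ^ 2 with hn
  have hnpos : 0 < n := by positivity
  have hnne : ((n : ℝ) : ℂ) ≠ 0 := by exact_mod_cast hnpos.ne'
  set c : ℂ := ((2 / n : ℝ) : ℂ) with hcdef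
  set s : ℂ := ∑ j, (starRingEnd ℂ) (v j) * a j with hs
  have hc : (starRingEnd ℂ) c = c := Complex.conj_ofReal _
  have hc2 : c = 2 / ((n : ℝ) : ℂ) := by rw [hcdef]; push_cast; ring
  have hvv : ∑ j, v j * (starRingEnd ℂ) (v j) = ((n : ℝ) : ℂ) := by
    rw [hn, enorm'_sq]
    push_cast
    exact Finset.sum_congr rfl fun j _ => Complex.mul_conj _
  have has : ∑ j, a j * (starRingEnd ℂ) (v j) = s := by
    rw [hs]; exact Finset.sum_congr rfl fun j _ => by ring
  have hcs : ∑ j, (starRingEnd ℂ) (a j) * v j = (starRingEnd ℂ) s := by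
    rw [hs, map_sum]
    exact Finset.sum_congr rfl fun j _ => by simp [_root_.map_mul, mul_comm]
  have expand : ∀ j, (a j - c * (v j * s)) * (starRingEnd ℂ) (a j - c * (v j * s))
      = a j * (starRingEnd ℂ) (a j)
        - c * (starRingEnd ℂ) s * (a j * (starRingEnd ℂ) (v j))
        - c * s * ((starRingEnd ℂ) (a j) * v j)
        + c * c * (s * (starRingEnd ℂ) s) * (v j * (starRingEnd ℂ) (v j)) := by
    intro j
    simp only [map_sub, _root_.map_mul, hc]
    ring
  have main : ∑ j, ((a j - c * (v j * s)) * (starRingEnd ℂ) (a j - c * (v j * s)))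
      = ∑ j, (a j * (starRingEnd ℂ) (a j)) := by
    simp only [expand]
    rw [Finset.sum_add_distrib, Finset.sum_sub_distrib, Finset.sum_sub_distrib,
      ← Finset.mul_sum, ← Finset.mul_sum, ← Finset.mul_sum, has, hcs, hvv]
    rw [hc2]
    field_simp
    ring
  have h1 : ∀ j, (householder v).mulVec a j = a j - c * (v j * s) := fun j => hh_mulVec v a j
  simp only [h1]
  have := congrArg Complex.re main
  simp only [Complex.mul_conj] at this
  push_cast at this
  exact_mod_cast this

lemma csign_mul_conj (z : ℂ) : (starRingEnd ℂ) (csign z) * z = (‖z‖ : ℂ) := by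
  unfold csign
  by_cases h : z = 0
  · simp [h]
  · have habs : (‖z‖ : ℂ) ≠ 0 := by
      simpa using (norm_ne_zero_iff.mpr h)
    rw [if_neg h, map_div₀, Complex.conj_ofReal, div_mul_eq_mul_div, mul_comm,
      Complex.mul_conj, Complex.normSq_eq_norm_sq]
    have habs2 : ‖z‖ ≠ 0 := norm_ne_zero_iff.mpr h
    push_cast
    field_simp

lemma csign_normSq (z : ℂ) : Complex.normSq (csign z) = 1 := by
  unfold csign
  by_cases h : z = 0
  · simp [h]
  · rw [if_neg h, Complex.normSq_div, Complex.normSq_ofReal, Complex.normSq_eq_norm_sq]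
    have habs : ‖z‖ ≠ 0 := norm_ne_zero_iff.mpr h
    field_simp
    try ring

theorem stmt_5 {M : ℕ} (a : Fin M → ℂ) (ha : a ≠ 0) (i : Fin M)
    (vhat : Fin M → ℂ)
    (hvhat : vhat = a + ((enorm' a : ℂ) * csign (a i)) • (Pi.single i 1 : Fin M → ℂ)) :
    ∀ v : Fin M → ℂ, v ≠ 0 →
      ‖(householder v).mulVec a i‖ ^ 2
        ≤ ‖(householder vhat).mulVec a i‖ ^ 2 := by
  intro v hv
  set N : ℝ := enorm' a with hN
  have hNpos : 0 < N := lt_of_le_of_ne (norm_nonneg _) (Ne.symm (enorm'_ne_zero ha))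
  set r : ℝ := ‖a i‖ with hr
  set g : ℂ := csign (a i) with hg
  have hrnn : 0 ≤ r := norm_nonneg _
  -- vhat values
  have hvi : vhat i = a i + (N : ℂ) * g := by
    rw [hvhat]; simp
  have hvj : ∀ j, j ≠ i → vhat j = a j := by
    intro j hj
    rw [hvhat]; simp [Pi.single_apply, hj.symm, if_neg (Ne.symm hj)]
  -- conj g * a i = r
  have hga : (starRingEnd ℂ) g * a i = (r : ℂ) := csign_mul_conj (a i)
  have hag : (starRingEnd ℂ) (a i) * g = (r : ℂ) := by
    have := congrArg (starRingEnd ℂ) hga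
    simpa [_root_.map_mul, Complex.conj_ofReal, mul_comm] using this
  have hgg : Complex.normSq g = 1 := csign_normSq (a i)
  have hNsq : (N : ℝ) ^ 2 = ∑ j, Complex.normSq (a j) := enorm'_sq a
  have hrsq : Complex.normSq (a i) = r ^ 2 := by
    rw [hr, Complex.sq_norm]
  -- sum s for vhat
  have hsh : ∑ j, (starRingEnd ℂ) (vhat j) * a j = ((N^2 + N*r : ℝ) : ℂ) := by
    have : ∀ j, (starRingEnd ℂ) (vhat j) * a j
        = (starRingEnd ℂ) (a j) * a j
          + (if j = i then ((N:ℝ):ℂ) * ((starRingEnd ℂ) g * a i) else 0) := by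
      intro j
      by_cases hj : j = i
      · subst hj
        rw [hvi]
        simp [map_add, _root_.map_mul, Complex.conj_ofReal]
        ring
      · rw [hvj j hj]
        simp [hj]
    simp only [this]
    rw [Finset.sum_add_distrib, Finset.sum_ite_eq' Finset.univ i, hga]
    have h1 : ∑ j, (starRingEnd ℂ) (a j) * a j = ((N^2 : ℝ) : ℂ) := by
      rw [hNsq]
      push_cast
      exact Finset.sum_congr rfl fun j _ => by rw [mul_comm, Complex.mul_conj]
    rw [h1]
    simp only [Finset.mem_univ, if_true]
    push_cast
    ring
  -- norm of vhat squared
  have hnh : enorm' vhat ^ 2 = 2 * (N^2 + N*r) := by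
    rw [enorm'_sq]
    have key : Complex.normSq (vhat i) = r^2 + 2*N*r + N^2 := by
      rw [hvi, Complex.normSq_add]
      have h2 : (a i * (starRingEnd ℂ) ((N:ℂ) * g)).re = N * r := by
        have : a i * (starRingEnd ℂ) ((N:ℂ) * g) = ((N*r : ℝ) : ℂ) := by
          rw [_root_.map_mul, Complex.conj_ofReal]
          push_cast
          calc a i * ((N:ℂ) * (starRingEnd ℂ) g) = (N:ℂ) * ((starRingEnd ℂ) g * a i) := by ring
            _ = (N:ℂ) * (r:ℂ) := by rw [hga]
        rw [this, Complex.ofReal_re]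
      rw [h2, hrsq, Complex.normSq_mul, Complex.normSq_ofReal, hgg]
      ring
    calc ∑ j, Complex.normSq (vhat j)
        = ∑ j, (Complex.normSq (a j) + (if j = i then r^2 + 2*N*r + N^2 - Complex.normSq (a i) else 0)) := by
          refine Finset.sum_congr rfl fun j _ => ?_
          by_cases hj : j = i
          · subst hj; rw [key]; simp
          · rw [hvj j hj]; simp [hj]
      _ = 2 * (N^2 + N*r) := by
          rw [Finset.sum_add_distrib, Finset.sum_ite_eq' Finset.univ i, ← hNsq, hrsq]
          simp only [Finset.mem_univ, if_true]
          ring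
  -- RHS value
  have hRHS : (householder vhat).mulVec a i = -((N:ℂ) * g) := by
    rw [hh_mulVec, hnh, hsh, hvi]
    have hden : (N^2 + N*r : ℝ) ≠ 0 := by positivity
    have hre : (2 / (2 * (N ^ 2 + N * r)) : ℝ) * (N^2 + N*r) = 1 := by field_simp
    have : ((2 / (2 * (N ^ 2 + N * r)) : ℝ) : ℂ) * ((N^2 + N*r : ℝ) : ℂ) = 1 := by
      rw [← Complex.ofReal_mul, hre, Complex.ofReal_one]
    rw [mul_comm ((a i + (N:ℂ)*g)), ← mul_assoc, this]
    ring
  rw [hRHS]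
  have hRHSval : ‖-((N:ℂ) * g)‖ ^ 2 = N^2 := by
    rw [Complex.sq_norm, Complex.normSq_neg, Complex.normSq_mul, Complex.normSq_ofReal, hgg]
    ring
  rw [hRHSval]
  -- LHS bound
  rw [Complex.sq_norm]
  calc Complex.normSq ((householder v).mulVec a i)
      ≤ ∑ j, Complex.normSq ((householder v).mulVec a j) :=
        Finset.single_le_sum (fun j _ => Complex.normSq_nonneg _) (Finset.mem_univ i)
    _ = ∑ j, Complex.normSq (a j) := hh_norm_sum v a hv
    _ = N^2 := hNsq.symm
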